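/- For all natural numbers n ≥ 1 and m, there exists a natural number c such that f(c) ≡ m (mod n); that is, the range of f meets every congruence class modulo n. -/

import Mathlib

noncomputable def phi : ℝ := (1 + Real.sqrt 5) / 2

noncomputable def f (n : ℕ) : ℕ := ⌊phi * n⌋₊

lemma phi_irrational : Irrational phi := by
  have h5 : Irrational (Real.sqrt 5) := (by norm_num : Nat.Prime 5).irrational_sqrt
  have h := ((h5.ratCast_add (q := 1)).ratCast_mul (q := 1/2) (by norm_num))
  have : phi = (1/2 : ℚ) * ((1 : ℚ) + Real.sqrt 5) := by
    unfold phi; push_cast; ring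
  rwa [this]

lemma phi_pos : 0 < phi := by
  unfold phi
  have : 0 ≤ Real.sqrt 5 := Real.sqrt_nonneg 5
  linarith

theorem f_surjective_mod (n : ℕ) (hn : 1 ≤ n) (m : ℕ) :
    ∃ c : ℕ, f c ≡ m [MOD n] := by
  haveI : Fact ((0:ℝ) < 1) := ⟨one_pos⟩
  have hn0 : (0:ℝ) < n := by exact_mod_cast hn
  set x : ℝ := phi / n with hxdef
  have hx_irr : Irrational x := phi_irrational.div_natCast (by omega)
  set S : AddSubgroup ℝ := AddSubgroup.closure {(1:ℝ), x} with hSdef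
  -- S is dense in ℝ
  have hS : Dense (S : Set ℝ) := by
    rcases AddSubgroup.dense_or_cyclic S with h | ⟨a, ha⟩
    · exact h
    · exfalso
      have h1 : (1:ℝ) ∈ S := AddSubgroup.subset_closure (by simp)
      have hx : x ∈ S := AddSubgroup.subset_closure (by simp)
      rw [ha, AddSubgroup.mem_closure_singleton] at h1 hx
      obtain ⟨p, hp⟩ := h1
      obtain ⟨q, hq⟩ := hx
      rw [zsmul_eq_mul] at hp hq
      have hp0 : (p:ℝ) ≠ 0 := by
        rintro h; rw [h, zero_mul] at hp; norm_num at hp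
      apply hx_irr.ne_rat ((q : ℚ) / (p : ℚ))
      have ha1 : a = 1 / p := by field_simp at hp ⊢; linarith
      rw [← hq, ha1]
      push_cast
      field_simp
  -- pass to the circle ℝ / ℤ
  set π : ℝ → AddCircle (1:ℝ) := fun r => (r : AddCircle (1:ℝ)) with hπdef
  have hπc : Continuous π := continuous_quotient_mk'
  have hπsurj : Function.Surjective π := Quotient.mk''_surjective
  set y : AddCircle (1:ℝ) := π x with hydef
  have himg : Dense (π '' (S : Set ℝ)) := hπsurj.denseRange.dense_image hπc hS
  -- the image of S is contained in the range of ℤ-multiples of y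
  have hsub : π '' (S : Set ℝ) ⊆ Set.range (fun z : ℤ => z • y) := by
    rintro _ ⟨r, hr, rfl⟩
    rw [SetLike.mem_coe, hSdef, AddSubgroup.mem_closure_pair] at hr
    obtain ⟨a, b, hab⟩ := hr
    refine ⟨b, ?_⟩
    show b • y = π r
    rw [hydef, hπdef, ← AddCircle.coe_zsmul, ← hab]
    show ((b • x : ℝ) : AddCircle (1:ℝ)) = ((a • (1:ℝ) + b • x : ℝ) : AddCircle (1:ℝ))
    rw [AddCircle.coe_add]
    have h1 : ((a • (1:ℝ) : ℝ) : AddCircle (1:ℝ)) = 0 := by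
      rw [AddCircle.coe_zsmul, AddCircle.coe_period, smul_zero]
    rw [h1, zero_add]
  have hzdense : DenseRange (fun z : ℤ => z • y) := himg.mono hsub
  have hndense : DenseRange (fun c : ℕ => c • y) := denseRange_zsmul_iff_nsmul.mp hzdense
  -- an open target set on the circle
  set m' : ℕ := m % n with hm'def
  have hm'n : m' < n := Nat.mod_lt _ (by omega)
  have hIoo : ((m' : ℝ)/n) < ((m' : ℝ)+1)/n := by
    apply div_lt_div_of_pos_right (by linarith) hn0
  have hopen : IsOpen (π '' Set.Ioo ((m':ℝ)/n) (((m':ℝ)+1)/n)) :=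
    QuotientAddGroup.isOpenMap_coe _ isOpen_Ioo
  have hne : (π '' Set.Ioo ((m':ℝ)/n) (((m':ℝ)+1)/n)).Nonempty :=
    (Set.nonempty_Ioo.2 hIoo).image _
  obtain ⟨c, hc⟩ := hndense.exists_mem_open hopen hne
  obtain ⟨r, hr, hrc⟩ := hc
  have hcy : c • y = π ((c : ℝ) * x) := by
    rw [hydef, hπdef]
    rw [← AddCircle.coe_nsmul, nsmul_eq_mul]
  rw [hcy] at hrc
  have hmem : (c : ℝ) * x - r ∈ AddSubgroup.zmultiples (1:ℝ) :=
    (QuotientAddGroup.eq_iff_sub_mem).mp hrc.symm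
  obtain ⟨z, hz⟩ := AddSubgroup.mem_zmultiples_iff.mp hmem
  rw [zsmul_eq_mul, mul_one] at hz
  have key : (c:ℝ) * phi = z * n + r * n := by
    have h1 : (c:ℝ) * x = (c:ℝ) * phi / n := by rw [hxdef]; ring
    have h2 : (c:ℝ) * phi / n = z + r := by rw [← h1]; linarith [hz]
    field_simp at h2; linarith
  obtain ⟨hr1, hr2⟩ := hr
  have hrn1 : (m':ℝ) < r * n := by
    have := (div_lt_iff₀ hn0).mp hr1; linarith
  have hrn2 : r * n < (m':ℝ) + 1 := by
    have := (lt_div_iff₀ hn0).mp hr2; linarith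
  have hcphi : 0 ≤ (c:ℝ) * phi := mul_nonneg (Nat.cast_nonneg c) phi_pos.le
  have hm1 : (m':ℝ) + 1 ≤ n := by exact_mod_cast hm'n
  have hz0 : 0 ≤ z := by
    by_contra h
    push_neg at h
    have hz1' : z ≤ -1 := by omega
    have hz1 : (z:ℝ) ≤ -1 := by exact_mod_cast hz1'
    nlinarith
  have hzc : ((z.toNat : ℕ) : ℝ) = (z : ℝ) := by
    exact_mod_cast congrArg (Int.cast : ℤ → ℝ) (Int.toNat_of_nonneg hz0)
  refine ⟨c, ?_⟩
  have hfloor : f c = z.toNat * n + m' := by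
    unfold f
    rw [Nat.floor_eq_iff (mul_nonneg phi_pos.le (Nat.cast_nonneg c))]
    push_cast [hzc]
    constructor
    · nlinarith [key, hrn1]
    · nlinarith [key, hrn2]
  rw [hfloor]
  show (z.toNat * n + m') % n = m % n
  rw [Nat.add_comm, Nat.add_mul_mod_self_right, hm'def]
  exact Nat.mod_mod_of_dvd m dvd_rfl
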